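/- arXiv:1209.5104 — 2 statements merged into one kernel-verified Lean document; each statement's English description precedes it below -/
import Mathlib

section
/- Let K be a field, f ∈ K[x_1,…,x_n] nonzero, M an n×n unimodular matrix with nonnegative integer entries, and u ∈ (ℝ_{≥0})^n. Then taking initial parts commutes with the monomial substitution φ_{M^t}: In_u(f∘φ_{M^t}) = (In_{Mu} f)∘φ_{M^t}. -/
open MvPolynomial Matrix

open Classical in
/-- The `w`-initial part of a multivariate polynomial: the sum of the terms whose
exponents have minimal `w`-weight among the exponents of `f`. -/
noncomputable def initialPart {n : ℕ} {K : Type*} [CommSemiring K] (w : Fin n → ℝ)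
    (f : MvPolynomial (Fin n) K) : MvPolynomial (Fin n) K :=
  ∑ μ ∈ f.support,
    if ∀ ν ∈ f.support, ∑ i, w i * (μ i : ℝ) ≤ ∑ i, w i * (ν i : ℝ)
    then monomial μ (f.coeff μ) else 0

/-- The monomial substitution `φ_M` on polynomials: `x_i ↦ ∏_j x_j ^ (M j i)`,
so that `x^μ ↦ x^(Mμ)`. -/
noncomputable def monomialSubst {n : ℕ} {K : Type*} [CommSemiring K]
    (M : Matrix (Fin n) (Fin n) ℕ) (f : MvPolynomial (Fin n) K) : MvPolynomial (Fin n) K :=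
  aeval (fun i => ∏ j, (X j : MvPolynomial (Fin n) K) ^ M j i) f

/-- A nonnegative integer square matrix is unimodular if its determinant (over `ℤ`) is `±1`. -/
def IsUnimodular {n : ℕ} (M : Matrix (Fin n) (Fin n) ℕ) : Prop :=
  (M.map fun a => (a : ℤ)).det = 1 ∨ (M.map fun a => (a : ℤ)).det = -1

section Aux

variable {n : ℕ} {K : Type*} [CommSemiring K]

/-- The map on exponent vectors induced by `φ_M`. -/
noncomputable def expMap (M : Matrix (Fin n) (Fin n) ℕ) (μ : Fin n →₀ ℕ) : Fin n →₀ ℕ :=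
  Finsupp.equivFunOnFinite.symm (M.mulVec μ)

lemma expMap_apply (M : Matrix (Fin n) (Fin n) ℕ) (μ : Fin n →₀ ℕ) (j : Fin n) :
    expMap M μ j = ∑ i, M j i * μ i := rfl

lemma prod_X_pow_eq_monomial' (s : Fin n →₀ ℕ) :
    (∏ j, (X j : MvPolynomial (Fin n) K) ^ s j) = monomial s 1 := by
  rw [← MvPolynomial.prod_X_pow_eq_monomial]
  rw [← Finset.prod_subset (Finset.subset_univ s.support)]
  intro x _ hx
  rw [Finsupp.notMem_support_iff] at hx
  rw [hx, pow_zero]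

lemma monomialSubst_monomial (M : Matrix (Fin n) (Fin n) ℕ) (μ : Fin n →₀ ℕ) (c : K) :
    monomialSubst M (monomial μ c) = monomial (expMap M μ) c := by
  rw [monomialSubst, aeval_monomial]
  rw [Finsupp.prod_fintype _ _ (fun i => pow_zero _)]
  have h1 : ∀ i : Fin n, (∏ j, (X j : MvPolynomial (Fin n) K) ^ M j i) ^ μ i
      = ∏ j, X j ^ (M j i * μ i) := by
    intro i
    rw [← Finset.prod_pow]
    exact Finset.prod_congr rfl fun j _ => by rw [← pow_mul]
  simp_rw [h1]
  rw [Finset.prod_comm]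
  have h2 : ∀ j : Fin n, (∏ i, (X j : MvPolynomial (Fin n) K) ^ (M j i * μ i))
      = X j ^ (expMap M μ j) := by
    intro j
    rw [expMap_apply, ← Finset.prod_pow_eq_pow_sum]
  simp_rw [h2, prod_X_pow_eq_monomial' (K := K) (expMap M μ)]
  rw [algebraMap_eq, C_mul_monomial, mul_one]

lemma monomialSubst_eq_sum (M : Matrix (Fin n) (Fin n) ℕ) (f : MvPolynomial (Fin n) K) :
    monomialSubst M f = ∑ μ ∈ f.support, monomial (expMap M μ) (f.coeff μ) := by
  conv_lhs => rw [f.as_sum]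
  rw [monomialSubst, map_sum]
  exact Finset.sum_congr rfl fun μ _ => monomialSubst_monomial M μ (f.coeff μ)

lemma expMap_injective {M : Matrix (Fin n) (Fin n) ℕ}
    (hM : IsUnit (M.map fun a => (a : ℤ)).det) : Function.Injective (expMap M) := by
  intro μ ν h
  set Mz := M.map fun a => (a : ℤ) with hMz
  have key : ∀ (σ : Fin n →₀ ℕ), Mz.mulVec (fun i => (σ i : ℤ)) =
      fun j => ((expMap M σ j : ℕ) : ℤ) := by
    intro σ
    funext j
    simp [expMap_apply, Matrix.mulVec, dotProduct, hMz, Matrix.map_apply]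
  have h2 : Mz.mulVec (fun i => (μ i : ℤ)) = Mz.mulVec (fun i => (ν i : ℤ)) := by
    rw [key μ, key ν, h]
  have h3 : (fun i => (μ i : ℤ)) = fun i => (ν i : ℤ) := by
    have := congrArg (Mz⁻¹.mulVec) h2
    rwa [Matrix.mulVec_mulVec, Matrix.mulVec_mulVec, Matrix.nonsing_inv_mul _ hM,
      Matrix.one_mulVec, Matrix.one_mulVec] at this
  ext i
  exact_mod_cast congrFun h3 i

lemma expMap_weight (M : Matrix (Fin n) (Fin n) ℕ) (u : Fin n → ℝ) (μ : Fin n →₀ ℕ) :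
    ∑ j, u j * ((expMap Mᵀ μ) j : ℝ) =
      ∑ i, ((M.map ((↑) : ℕ → ℝ)).mulVec u) i * (μ i : ℝ) := by
  have : ∀ j, ((expMap Mᵀ μ j : ℕ) : ℝ) = ∑ i, (M i j : ℝ) * (μ i : ℝ) := by
    intro j
    rw [expMap_apply]
    push_cast
    simp [Matrix.transpose_apply]
  simp_rw [this, Matrix.mulVec, dotProduct, Matrix.map_apply, Finset.mul_sum,
    Finset.sum_mul]
  rw [Finset.sum_comm]
  congr 1; funext i; congr 1; funext j; ring

end Aux

/-- Taking initial parts commutes with the monomial substitution `φ_{Mᵀ}`: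
for `M` a nonnegative unimodular matrix and `u` a nonnegative vector,
`In_u (f ∘ φ_{Mᵀ}) = (In_{Mu} f) ∘ φ_{Mᵀ}`. -/
theorem initialPart_monomialSubst {n : ℕ} {K : Type*} [Field K]
    (f : MvPolynomial (Fin n) K) (hf : f ≠ 0)
    (M : Matrix (Fin n) (Fin n) ℕ) (hM : IsUnimodular M)
    (u : Fin n → ℝ) (hu : ∀ i, 0 ≤ u i) :
    initialPart u (monomialSubst Mᵀ f) =
      monomialSubst Mᵀ (initialPart ((M.map ((↑) : ℕ → ℝ)).mulVec u) f) := by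
  classical
  -- unimodularity of Mᵀ
  have hMt : IsUnit ((Mᵀ).map fun a => (a : ℤ)).det := by
    rw [show (Mᵀ).map (fun a => (a : ℤ)) = ((M.map fun a => (a : ℤ)))ᵀ from rfl,
      Matrix.det_transpose]
    rcases hM with h | h <;> rw [h]
    · exact isUnit_one
    · exact isUnit_one.neg
  have hTinj : Function.Injective (expMap Mᵀ) := expMap_injective hMt
  set T := expMap Mᵀ with hT
  set g := monomialSubst Mᵀ f with hg
  -- coefficients of g
  have hcoeff : ∀ μ, g.coeff (T μ) = f.coeff μ := by
    intro μ
    rw [hg, monomialSubst_eq_sum, coeff_sum]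
    simp only [coeff_monomial]
    by_cases hμ : μ ∈ f.support
    · rw [Finset.sum_eq_single μ]
      · rw [if_pos rfl]
      · intro b hb hbne
        exact if_neg fun h => hbne (hTinj h)
      · intro h; exact absurd hμ h
    · rw [Finset.sum_eq_zero, eq_comm]
      · rwa [← MvPolynomial.notMem_support_iff]
      · intro b hb
        refine if_neg fun h => ?_
        rw [hTinj h] at hb
        exact hμ hb
  -- support of g
  have hsupp : g.support = f.support.image T := by
    ext ν
    simp only [MvPolynomial.mem_support_iff, Finset.mem_image]
    constructor
    · intro hν
      by_contra hc
      push_neg at hc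
      apply hν
      rw [hg, monomialSubst_eq_sum, coeff_sum]
      refine Finset.sum_eq_zero fun b hb => ?_
      rw [coeff_monomial]
      exact if_neg fun h => hc b (MvPolynomial.mem_support_iff.mp hb) h
    · rintro ⟨μ, hμ, rfl⟩
      rw [hcoeff]
      exact hμ
  -- equivalence of minimality conditions
  have hcond : ∀ μ : Fin n →₀ ℕ,
      (∀ ν ∈ f.support.image T, ∑ i, u i * ((T μ) i : ℝ) ≤ ∑ i, u i * (ν i : ℝ)) ↔
      (∀ ν ∈ f.support, ∑ i, ((M.map ((↑) : ℕ → ℝ)).mulVec u) i * (μ i : ℝ) ≤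
        ∑ i, ((M.map ((↑) : ℕ → ℝ)).mulVec u) i * (ν i : ℝ)) := by
    intro μ
    constructor
    · intro h ν hν
      rw [← expMap_weight, ← expMap_weight]
      exact h (T ν) (Finset.mem_image_of_mem T hν)
    · intro h ν hν
      rcases Finset.mem_image.mp hν with ⟨σ, hσ, rfl⟩
      rw [hT, expMap_weight, expMap_weight]
      exact h σ hσ
  -- rewrite both sides
  rw [initialPart, initialPart, hsupp,
    Finset.sum_image (fun a _ b _ h => hTinj h)]
  have : monomialSubst Mᵀ
      (∑ μ ∈ f.support,
        if ∀ ν ∈ f.support, ∑ i, ((M.map ((↑) : ℕ → ℝ)).mulVec u) i * (μ i : ℝ) ≤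
            ∑ i, ((M.map ((↑) : ℕ → ℝ)).mulVec u) i * (ν i : ℝ)
        then monomial μ (f.coeff μ) else 0)
      = ∑ μ ∈ f.support,
        if ∀ ν ∈ f.support, ∑ i, ((M.map ((↑) : ℕ → ℝ)).mulVec u) i * (μ i : ℝ) ≤
            ∑ i, ((M.map ((↑) : ℕ → ℝ)).mulVec u) i * (ν i : ℝ)
        then monomial (T μ) (f.coeff μ) else 0 := by
    rw [monomialSubst, map_sum]
    refine Finset.sum_congr rfl fun μ _ => ?_
    split_ifs with h
    · exact monomialSubst_monomial Mᵀ μ (f.coeff μ)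
    · exact map_zero _
  rw [this]
  refine Finset.sum_congr rfl fun μ hμ => ?_
  rw [hcoeff]
  exact if_congr (hcond μ) rfl rfl
end

section
/- Let K be a field, f ∈ K[x_1,…,x_n] nonzero, ω ∈ (ℝ_{≥0})^n, and let ν belong to the closure in ℝ^n of the set {u ∈ (ℝ_{≥0})^n : In_u f = In_ω f}. Then supp(In_ω f) ⊆ supp(In_ν f). In particular, if In_ν f is a monomial then In_ω f is a monomial. -/
open MvPolynomial Matrix

open Classical in
lemma coeff_initialPart {n : ℕ} {K : Type*} [CommSemiring K] (w : Fin n → ℝ)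
    (f : MvPolynomial (Fin n) K) (μ : Fin n →₀ ℕ) :
    (initialPart w f).coeff μ =
      if μ ∈ f.support ∧ (∀ ν ∈ f.support, ∑ i, w i * (μ i : ℝ) ≤ ∑ i, w i * (ν i : ℝ))
      then f.coeff μ else 0 := by
  unfold initialPart
  rw [coeff_sum]
  simp only [apply_ite (coeff μ), coeff_monomial, coeff_zero]
  rw [Finset.sum_eq_single μ (fun b _ hb => by simp [hb])
    (fun h => by simp [notMem_support_iff.mp h])]
  by_cases h1 : μ ∈ f.support <;>
    by_cases h2 : (∀ ν ∈ f.support, ∑ i, w i * (μ i : ℝ) ≤ ∑ i, w i * (ν i : ℝ)) <;>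
    simp [h1, h2]
  all_goals exact fun _ => notMem_support_iff.mp h1

/-- If `ν` belongs to the closure of the set of nonnegative vectors `u`
with `In_u f = In_ω f`, then `supp (In_ω f) ⊆ supp (In_ν f)`.  In particular, if
`In_ν f` is a monomial then so is `In_ω f`. -/
theorem support_initialPart_subset {n : ℕ} {K : Type*} [Field K]
    (f : MvPolynomial (Fin n) K) (hf : f ≠ 0)
    (w : Fin n → ℝ) (hw : ∀ i, 0 ≤ w i) (v : Fin n → ℝ)
    (hv : v ∈ closure {u : Fin n → ℝ | (∀ i, 0 ≤ u i) ∧ initialPart u f = initialPart w f}) :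
    (initialPart w f).support ⊆ (initialPart v f).support := by
  intro μ hμ
  rw [mem_support_iff, coeff_initialPart] at hμ
  by_cases hc : μ ∈ f.support ∧
      (∀ ν ∈ f.support, ∑ i, w i * (μ i : ℝ) ≤ ∑ i, w i * (ν i : ℝ))
  swap
  · rw [if_neg hc] at hμ; exact absurd rfl hμ
  rw [if_pos hc] at hμ
  have hμf : μ ∈ f.support := hc.1
  set T : Set (Fin n → ℝ) :=
    {u | ∀ ν ∈ f.support, ∑ i, u i * (μ i : ℝ) ≤ ∑ i, u i * (ν i : ℝ)} with hT
  have hclosed : IsClosed T := by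
    have : T = ⋂ ν ∈ f.support,
        {u : Fin n → ℝ | ∑ i, u i * (μ i : ℝ) ≤ ∑ i, u i * (ν i : ℝ)} := by
      ext u; simp [hT]
    rw [this]
    refine isClosed_biInter fun ν _ => isClosed_le ?_ ?_ <;>
      exact continuous_finset_sum _ fun i _ => (continuous_apply i).mul continuous_const
  have hsub : {u : Fin n → ℝ | (∀ i, 0 ≤ u i) ∧ initialPart u f = initialPart w f} ⊆ T := by
    intro u hu
    have h1 : (initialPart u f).coeff μ ≠ 0 := by
      rw [hu.2, coeff_initialPart, if_pos hc]; exact hμ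
    rw [coeff_initialPart] at h1
    have hcond : μ ∈ f.support ∧
        (∀ ν ∈ f.support, ∑ i, u i * (μ i : ℝ) ≤ ∑ i, u i * (ν i : ℝ)) := by
      by_contra hcc
      rw [if_neg hcc] at h1; exact h1 rfl
    exact hcond.2
  have hvT : v ∈ T := closure_minimal hsub hclosed hv
  rw [mem_support_iff, coeff_initialPart, if_pos ⟨hμf, hvT⟩]
  exact hμ
end
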